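/- Let E be a real normed vector space, let F : E → ℝ be twice continuously differentiable, let ρ ∈ ℝ, and define G : E → ℝ by G(x) = σ(F(x) − ρ), where σ(x) = 1/(1+exp(−x)) is the sigmoid function. Fix a point w ∈ E and constants L_c, L_s ≥ 0 such that ‖DF(w)‖ ≤ L_c (operator norm of the first Fréchet derivative) and ‖D²F(w)‖ ≤ L_s (operator norm of the second Fréchet derivative as a continuous bilinear map). Then ‖D²G(w)‖ ≤ L_c²/4 + q·L_s, where q = σ(F(w)−ρ)·(1−σ(F(w)−ρ)). -/

import Mathlib

noncomputable def sigmoid (x : ℝ) : ℝ := 1 / (1 + Real.exp (-x))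

lemma one_add_exp_pos (x : ℝ) : 0 < 1 + Real.exp (-x) := by positivity

lemma sigmoid_pos (x : ℝ) : 0 < sigmoid x := by
  unfold sigmoid; positivity

lemma sigmoid_lt_one (x : ℝ) : sigmoid x < 1 := by
  unfold sigmoid
  rw [div_lt_one (one_add_exp_pos x)]
  have := Real.exp_pos (-x)
  linarith

lemma one_sub_sigmoid (x : ℝ) : 1 - sigmoid x = Real.exp (-x) / (1 + Real.exp (-x)) := by
  unfold sigmoid
  field_simp
  ring

lemma hasDerivAt_sigmoid (x : ℝ) :
    HasDerivAt sigmoid (sigmoid x * (1 - sigmoid x)) x := by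
  have h0 : HasDerivAt (fun y : ℝ => 1 + Real.exp (-y)) (-Real.exp (-x)) x := by
    have := (Real.hasDerivAt_exp (-x)).comp x (hasDerivAt_neg x)
    simpa using (this.const_add 1)
  have hne : (1 + Real.exp (-x)) ≠ 0 := (one_add_exp_pos x).ne'
  have h1 := h0.inv hne
  have hsig : sigmoid = fun y : ℝ => (1 + Real.exp (-y))⁻¹ := by
    funext y; simp [sigmoid]
  have : HasDerivAt sigmoid (-(-Real.exp (-x)) / (1 + Real.exp (-x)) ^ 2) x := by
    rw [hsig]; exact h1
  convert this using 1
  rw [one_sub_sigmoid]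
  unfold sigmoid
  field_simp

noncomputable def sig' (x : ℝ) : ℝ := sigmoid x * (1 - sigmoid x)

lemma sig'_nonneg (x : ℝ) : 0 ≤ sig' x := by
  have h1 := sigmoid_pos x
  have h2 := sigmoid_lt_one x
  unfold sig'; nlinarith

lemma sig'_le_quarter (x : ℝ) : sig' x ≤ 1 / 4 := by
  unfold sig'; nlinarith [sq_nonneg (sigmoid x - 1/2)]

lemma hasDerivAt_sig' (x : ℝ) :
    HasDerivAt sig' (sig' x * (1 - 2 * sigmoid x)) x := by
  have h := (hasDerivAt_sigmoid x).mul ((hasDerivAt_sigmoid x).const_sub 1)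
  refine h.congr_deriv ?_
  unfold sig'
  ring

theorem maxfl_local_smoothness
    {E : Type*} [NormedAddCommGroup E] [NormedSpace ℝ E]
    (F : E → ℝ) (hF : ContDiff ℝ 2 F) (ρ : ℝ) (w : E)
    (Lc Ls : ℝ) (hLc : 0 ≤ Lc) (hLs : 0 ≤ Ls)
    (h1 : ‖fderiv ℝ F w‖ ≤ Lc)
    (h2 : ‖fderiv ℝ (fderiv ℝ F) w‖ ≤ Ls) :
    ‖fderiv ℝ (fderiv ℝ (fun x => sigmoid (F x - ρ))) w‖
      ≤ Lc ^ 2 / 4 + sigmoid (F w - ρ) * (1 - sigmoid (F w - ρ)) * Ls := by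
  have hFd : Differentiable ℝ F := hF.differentiable two_ne_zero
  -- first derivative of G
  have hG : ∀ x : E, HasFDerivAt (fun x => sigmoid (F x - ρ))
      (sig' (F x - ρ) • fderiv ℝ F x) x := by
    intro x
    have hf : HasFDerivAt (fun x => F x - ρ) (fderiv ℝ F x) x :=
      (hFd x).hasFDerivAt.sub_const ρ
    have := (hasDerivAt_sigmoid (F x - ρ)).comp_hasFDerivAt x hf; exact this
  have hGfd : (fderiv ℝ (fun x => sigmoid (F x - ρ)))
      = fun x => sig' (F x - ρ) • fderiv ℝ F x := by
    funext x; exact (hG x).fderiv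
  set L := fderiv ℝ F w with hL
  set B := fderiv ℝ (fderiv ℝ F) w with hB
  set a := sig' (F w - ρ) with ha
  set b := sig' (F w - ρ) * (1 - 2 * sigmoid (F w - ρ)) with hb
  -- derivative of x ↦ sig' (F x - ρ)
  have hc : HasFDerivAt (fun x => sig' (F x - ρ)) (b • L) w := by
    have hf : HasFDerivAt (fun x => F x - ρ) L w := (hFd w).hasFDerivAt.sub_const ρ
    exact (hasDerivAt_sig' (F w - ρ)).comp_hasFDerivAt w hf
  have hf' : HasFDerivAt (fderiv ℝ F) B w := by
    have : ContDiff ℝ 1 (fderiv ℝ F) := hF.fderiv_right (by norm_num)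
    exact (this.differentiable one_ne_zero w).hasFDerivAt
  have hsm : HasFDerivAt (fun x => sig' (F x - ρ) • fderiv ℝ F x)
      (a • B + (b • L).smulRight L) w := hc.smul hf'
  have key : fderiv ℝ (fderiv ℝ (fun x => sigmoid (F x - ρ))) w
      = a • B + (b • L).smulRight L := by
    rw [hGfd]; exact hsm.fderiv
  rw [key]
  have hbL : ‖(b • L).smulRight L‖ ≤ Lc ^ 2 / 4 := by
    rw [ContinuousLinearMap.norm_smulRight_apply, norm_smul]
    have hLn : ‖L‖ ≤ Lc := h1
    have hbabs : |b| ≤ 1 / 4 := by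
      rw [hb, abs_mul]
      have h1σ : |1 - 2 * sigmoid (F w - ρ)| ≤ 1 := by
        have := sigmoid_pos (F w - ρ)
        have := sigmoid_lt_one (F w - ρ)
        rw [abs_le]; constructor <;> linarith
      have h2σ : |sig' (F w - ρ)| ≤ 1 / 4 := by
        rw [abs_of_nonneg (sig'_nonneg _)]; exact sig'_le_quarter _
      calc |sig' (F w - ρ)| * |1 - 2 * sigmoid (F w - ρ)|
          ≤ (1/4) * 1 := mul_le_mul h2σ h1σ (abs_nonneg _) (by norm_num)
        _ = 1/4 := by ring
    calc ‖b‖ * ‖L‖ * ‖L‖ ≤ (1/4) * Lc * Lc := by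
          apply mul_le_mul _ hLn (norm_nonneg _) (by positivity)
          exact mul_le_mul hbabs hLn (norm_nonneg _) (by norm_num)
      _ = Lc ^ 2 / 4 := by ring
  have haB : ‖a • B‖ ≤ sigmoid (F w - ρ) * (1 - sigmoid (F w - ρ)) * Ls := by
    calc ‖a • B‖ = ‖a‖ * ‖B‖ := by
          have := NormedSpace.toNormSMulClass (𝕜 := ℝ) (E := E →L[ℝ] E →L[ℝ] ℝ)
          exact norm_smul a B
      _ = a * ‖B‖ := by rw [Real.norm_eq_abs, abs_of_nonneg (sig'_nonneg _)]
      _ ≤ sigmoid (F w - ρ) * (1 - sigmoid (F w - ρ)) * Ls :=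
          mul_le_mul_of_nonneg_left h2 (sig'_nonneg _)
  calc ‖a • B + (b • L).smulRight L‖ ≤ ‖a • B‖ + ‖(b • L).smulRight L‖ := norm_add_le (E := E →L[ℝ] E →L[ℝ] ℝ) _ _
    _ ≤ sigmoid (F w - ρ) * (1 - sigmoid (F w - ρ)) * Ls + Lc ^ 2 / 4 := add_le_add haB hbL
    _ = Lc ^ 2 / 4 + sigmoid (F w - ρ) * (1 - sigmoid (F w - ρ)) * Ls := by ring
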